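/- Fix $a > 0$, $p \in \mathbb{R}^d$, $x_0 \in \mathbb{R}^d$ with all coordinates positive, and define on $\{x : x_i > 0\ \forall i\}$ the functions $w(x) = a^{1/d} d (x_1\cdots x_d)^{1/d} - a^{1/d} d$ and $v(x) = \tfrac{1}{2} a^{-(d-1)/d}\big( (p\cdot x)\big((x_1\cdots x_d)^{1/d} - (x_1\cdots x_d)^{-1/d}\big) - 2 (p\cdot x_0)\big((x_1\cdots x_d)^{1/d} - 1\big) \big)$. Then $\sum_{i=1}^d \Big( \prod_{j \neq i} \partial_{x_j} w(x) \Big) \partial_{x_i} v(x) = p \cdot (x - x_0)$ for all such $x$. -/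

import Mathlib

set_option maxHeartbeats 1000000

open ContinuousLinearMap

/-- The corrector `v` solves the linearization
`∑ i (∏_{j≠i} ∂_j w) ∂_i v = p ⋅ (x - x₀)` of the Hamilton–Jacobi equation
around the explicit solution `w(x) = a^{1/d} d (x₁⋯x_d)^{1/d} - a^{1/d} d`. -/
theorem corrector_solves_linearization (d : ℕ) (hd : 0 < d) (a : ℝ) (ha : 0 < a)
    (p x0 x : Fin d → ℝ) (hx : ∀ i, 0 < x i) :
    let g : (Fin d → ℝ) → ℝ := fun y => (∏ j, y j) ^ ((1 : ℝ) / d)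
    let w : (Fin d → ℝ) → ℝ := fun y => a ^ ((1 : ℝ) / d) * d * g y - a ^ ((1 : ℝ) / d) * d
    let v : (Fin d → ℝ) → ℝ := fun y =>
      (1 / 2) * a ^ (-((d : ℝ) - 1) / d) *
        ((∑ j, p j * y j) * (g y - (g y)⁻¹) - 2 * (∑ j, p j * x0 j) * (g y - 1))
    ∑ i, (∏ j ∈ Finset.univ.erase i, fderiv ℝ w x (Pi.single j 1)) *
          fderiv ℝ v x (Pi.single i 1)
      = ∑ i, p i * (x i - x0 i) := by
  intro g w v
  have hdR : (0:ℝ) < d := Nat.cast_pos.mpr hd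
  set P : ℝ := ∏ j, x j with hPdef
  have hP : 0 < P := Finset.prod_pos fun i _ => hx i
  have hg0 : 0 < g x := Real.rpow_pos_of_pos hP _
  -- derivative of the product
  have hprod : HasFDerivAt (fun y : Fin d → ℝ => ∏ j, y j)
      (∑ i, (∏ j ∈ Finset.univ.erase i, x j) • proj (R := ℝ) (φ := fun _ : Fin d => ℝ) i) x := by
    exact hasFDerivAt_finset_prod
  -- derivative of g
  have hgd : HasFDerivAt g
      (((1:ℝ)/d * P ^ ((1:ℝ)/d - 1)) •
        ∑ i, (∏ j ∈ Finset.univ.erase i, x j) • proj (R := ℝ) (φ := fun _ : Fin d => ℝ) i) x := by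
    exact (Real.hasDerivAt_rpow_const (p := (1:ℝ)/d) (Or.inl hP.ne')).comp_hasFDerivAt x hprod
  set Lg := ((1:ℝ)/d * P ^ ((1:ℝ)/d - 1)) •
        ∑ i, (∏ j ∈ Finset.univ.erase i, x j) • proj (R := ℝ) (φ := fun _ : Fin d => ℝ) i with hLg
  have hLgval : ∀ i, Lg (Pi.single i 1) = g x / (d * x i) := by
    intro i
    have h1 : (∑ j, (∏ k ∈ Finset.univ.erase j, x k) • proj (R := ℝ) (φ := fun _ : Fin d => ℝ) j)
        (Pi.single i 1) = ∏ k ∈ Finset.univ.erase i, x k := by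
      rw [ContinuousLinearMap.sum_apply]
      rw [Finset.sum_eq_single i]
      · simp
      · intro j _ hj
        simp [Pi.single_apply, hj]
      · simp
    have h2 : (∏ k ∈ Finset.univ.erase i, x k) = P / x i := by
      rw [eq_div_iff (hx i).ne', Finset.prod_erase_mul Finset.univ x (Finset.mem_univ i)]
    have h3 : P ^ ((1:ℝ)/d - 1) = g x / P := by
      rw [Real.rpow_sub hP, Real.rpow_one]
    rw [hLg, ContinuousLinearMap.smul_apply, h1, h2, h3]
    field_simp [hP.ne']
    rw [smul_eq_mul]
    field_simp
  -- derivative of w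
  have hwd : HasFDerivAt w ((a ^ ((1:ℝ)/d) * d) • Lg) x := (hgd.const_mul _).sub_const _
  have hwval : ∀ i, fderiv ℝ w x (Pi.single i 1) = a ^ ((1:ℝ)/d) * g x / x i := by
    intro i
    rw [hwd.fderiv, ContinuousLinearMap.smul_apply, hLgval i, smul_eq_mul]
    field_simp [hdR.ne']
  -- derivative of v
  set S : ℝ := ∑ j, p j * x j with hS
  set S0 : ℝ := ∑ j, p j * x0 j with hS0
  set c : ℝ := (1/2) * a ^ (-((d:ℝ) - 1) / d) with hc
  set LS := ∑ j, p j • proj (R := ℝ) (φ := fun _ : Fin d => ℝ) j with hLS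
  have hSd : HasFDerivAt (fun y : Fin d → ℝ => ∑ j, p j * y j) LS x := by
    have : HasFDerivAt (fun y : Fin d → ℝ => LS y) LS x := LS.hasFDerivAt
    convert this using 2 with y
    rw [hLS, ContinuousLinearMap.sum_apply]
    simp [smul_eq_mul]
  have hginv : HasFDerivAt (fun y => (g y)⁻¹) ((-(g x ^ 2)⁻¹) • Lg) x := by
    exact (hasDerivAt_inv hg0.ne').comp_hasFDerivAt x hgd
  have hvd : HasFDerivAt v
      (c • ((S • (Lg - (-(g x ^ 2)⁻¹) • Lg) + (g x - (g x)⁻¹) • LS)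
        - (2 * S0) • Lg)) x := by
    have h1 : HasFDerivAt (fun y : Fin d → ℝ => (∑ j, p j * y j) * (g y - (g y)⁻¹))
        (S • (Lg - (-(g x ^ 2)⁻¹) • Lg) + (g x - (g x)⁻¹) • LS) x := hSd.mul (hgd.sub hginv)
    have h2 : HasFDerivAt (fun y : Fin d → ℝ => 2 * S0 * (g y - 1)) ((2 * S0) • Lg) x :=
      (hgd.sub_const 1).const_mul _
    exact (h1.sub h2).const_mul c
  have hvval : ∀ i, fderiv ℝ v x (Pi.single i 1)
      = c * (S * (1 + (g x ^ 2)⁻¹) * (g x / (d * x i))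
          + (g x - (g x)⁻¹) * p i - 2 * S0 * (g x / (d * x i))) := by
    intro i
    have hLSval : LS (Pi.single i 1) = p i := by
      rw [hLS, ContinuousLinearMap.sum_apply]
      rw [Finset.sum_eq_single i]
      · simp
      · intro j _ hj; simp [Pi.single_apply, hj]
      · simp
    rw [hvd.fderiv]
    simp only [ContinuousLinearMap.smul_apply, ContinuousLinearMap.sub_apply,
      ContinuousLinearMap.add_apply, hLgval i, hLSval, smul_eq_mul]
    ring
  -- compute the product ∏_{j≠i} ∂_j w
  have hgpow : g x ^ d = P := by
    rw [← Real.rpow_natCast (g x) d]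
    show (P ^ ((1:ℝ)/d)) ^ (d:ℝ) = P
    rw [← Real.rpow_mul hP.le, one_div, inv_mul_cancel₀ hdR.ne', Real.rpow_one]
  have hprodw : ∀ i, (∏ j ∈ Finset.univ.erase i, fderiv ℝ w x (Pi.single j 1))
      = (a ^ ((1:ℝ)/d)) ^ (d - 1) * x i / g x := by
    intro i
    have h4 : ∀ j ∈ Finset.univ.erase i, fderiv ℝ w x (Pi.single j 1)
        = a ^ ((1:ℝ)/d) * g x / x j := fun j _ => hwval j
    rw [Finset.prod_congr rfl h4]
    rw [Finset.prod_div_distrib, Finset.prod_const, Finset.card_erase_of_mem (Finset.mem_univ i),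
      Finset.card_univ, Fintype.card_fin]
    have h2 : (∏ k ∈ Finset.univ.erase i, x k) = P / x i := by
      rw [eq_div_iff (hx i).ne', Finset.prod_erase_mul Finset.univ x (Finset.mem_univ i)]
    rw [h2, mul_pow]
    have hgd1 : g x ^ (d - 1) = P / g x := by
      have : g x ^ (d - 1) * g x = P := by
        rw [← pow_succ, Nat.sub_add_cancel hd, hgpow]
      field_simp [← this]
      exact this
    rw [hgd1]
    field_simp
  -- the a-power cancellation
  have hac : (a ^ ((1:ℝ)/d)) ^ (d - 1) * c = 1 / 2 := by
    rw [hc, ← Real.rpow_natCast (a ^ ((1:ℝ)/d)) (d-1), ← Real.rpow_mul ha.le]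
    rw [← mul_assoc]
    nth_rewrite 2 [mul_comm]
    rw [mul_assoc, ← Real.rpow_add ha]
    have : ((d - 1 : ℕ) : ℝ) = (d : ℝ) - 1 := by
      rw [Nat.cast_sub hd, Nat.cast_one]
    rw [this]
    have : (1:ℝ)/d * ((d:ℝ) - 1) + -((d:ℝ) - 1)/d = 0 := by field_simp; ring
    rw [this, Real.rpow_zero, mul_one]
  -- each term of the sum
  have hterm : ∀ i, (∏ j ∈ Finset.univ.erase i, fderiv ℝ w x (Pi.single j 1)) *
          fderiv ℝ v x (Pi.single i 1)
      = (1/(2*d)) * S * (1 + (g x ^ 2)⁻¹) + (1/2) * (1 - (g x ^ 2)⁻¹) * (p i * x i)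
        - S0 / d := by
    intro i
    rw [hprodw i, hvval i]
    have hxi := (hx i).ne'
    have hgg : g x - (g x)⁻¹ = (1 - (g x ^ 2)⁻¹) * g x := by
      field_simp
    rw [hgg]
    have : (a ^ ((1:ℝ)/d)) ^ (d - 1) * x i / g x * (c * (S * (1 + (g x ^ 2)⁻¹) * (g x / (d * x i))
          + (1 - (g x ^ 2)⁻¹) * g x * p i - 2 * S0 * (g x / (d * x i))))
        = ((a ^ ((1:ℝ)/d)) ^ (d - 1) * c) * (x i / g x * (S * (1 + (g x ^ 2)⁻¹) * (g x / (d * x i))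
          + (1 - (g x ^ 2)⁻¹) * g x * p i - 2 * S0 * (g x / (d * x i)))) := by ring
    rw [this, hac]
    have key2 : ∀ (G X Dv A B t q : ℝ), G ≠ 0 → X ≠ 0 → Dv ≠ 0 →
        1/2 * (X / G * (A * (1+t) * (G/(Dv*X)) + (1-t)*G*q - 2*B*(G/(Dv*X))))
          = 1/(2*Dv)*A*(1+t) + 1/2*(1-t)*(q*X) - B/Dv := by
      intro G X Dv A B t q hG hX hDv
      field_simp
    exact key2 (g x) (x i) d S S0 _ (p i) hg0.ne' hxi hdR.ne'
  have hRHS : ∑ i, p i * (x i - x0 i) = S - S0 := by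
    rw [hS, hS0, ← Finset.sum_sub_distrib]
    exact Finset.sum_congr rfl fun i _ => by ring
  rw [Finset.sum_congr rfl (fun i _ => hterm i), hRHS, Finset.sum_sub_distrib,
    Finset.sum_add_distrib, Finset.sum_const, Finset.sum_const,
    Finset.card_univ, Fintype.card_fin, nsmul_eq_mul, nsmul_eq_mul, ← Finset.mul_sum, ← hS]
  have key : ∀ A B t : ℝ, (d:ℝ) * (1/(2*(d:ℝ)) * A * (1+t)) + 1/2*(1-t)*A - (d:ℝ)*(B/(d:ℝ))
      = A - B := by
    intro A B t
    field_simp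
    ring
  exact key S S0 _
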